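/- Let f ∈ ℝ[X,Y] be a nonzero polynomial in two variables that is divisible neither by X nor by Y, let a, b, c be natural numbers, and let ε ∈ {−1, +1}. Suppose that for all x, y ∈ ℝ with x·y·(x+y) ≠ 0 one has f(x,y)/(xᵃ yᵇ (x+y)ᶜ) = ε · f(y,x)/(yᵃ xᵇ (x+y)ᶜ). Then a = b. -/

import Mathlib

/-- Evaluation of a two-variable real polynomial at `(x, y)`. -/
noncomputable def ev (f : MvPolynomial (Fin 2) ℝ) (x y : ℝ) : ℝ :=
  MvPolynomial.eval ![x, y] f

open MvPolynomial

lemma primeX0 : Prime (X 0 : MvPolynomial (Fin 2) ℝ) := by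
  rw [← MulEquiv.prime_iff (MvPolynomial.finSuccEquiv ℝ 1).toRingEquiv.toMulEquiv]
  have : (MvPolynomial.finSuccEquiv ℝ 1).toRingEquiv.toMulEquiv (X 0) = Polynomial.X := by
    simpa using MvPolynomial.finSuccEquiv_X_zero (R := ℝ) (n := 1)
  rw [this]
  exact Polynomial.prime_X

lemma primeX1 : Prime (X 1 : MvPolynomial (Fin 2) ℝ) := by
  rw [← MulEquiv.prime_iff (MvPolynomial.renameEquiv ℝ (Equiv.swap (0 : Fin 2) 1)).toRingEquiv.toMulEquiv]
  have : (MvPolynomial.renameEquiv ℝ (Equiv.swap (0 : Fin 2) 1)).toRingEquiv.toMulEquiv (X 1)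
      = (X 0 : MvPolynomial (Fin 2) ℝ) := by
    show rename (Equiv.swap (0 : Fin 2) 1) (X 1) = X 0
    simp [rename_X, Equiv.swap_apply_right]
  rw [this]
  exact primeX0

lemma X1_not_dvd_X0_pow (k : ℕ) : ¬ (X 1 : MvPolynomial (Fin 2) ℝ) ∣ (X 0) ^ k := by
  intro hd
  have h1 : (X 1 : MvPolynomial (Fin 2) ℝ) ∣ X 0 := primeX1.dvd_of_dvd_pow hd
  obtain ⟨q, hq⟩ := h1
  have := congrArg (MvPolynomial.eval ![(1:ℝ), 0]) hq
  simp at this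

lemma X0_not_dvd_X1_pow (k : ℕ) : ¬ (X 0 : MvPolynomial (Fin 2) ℝ) ∣ (X 1) ^ k := by
  intro hd
  have h1 : (X 0 : MvPolynomial (Fin 2) ℝ) ∣ X 1 := primeX0.dvd_of_dvd_pow hd
  obtain ⟨q, hq⟩ := h1
  have := congrArg (MvPolynomial.eval ![(0:ℝ), 1]) hq
  simp at this

theorem stmt_9 (f : MvPolynomial (Fin 2) ℝ) (a b c : ℕ) (ε : ℝ)
    (hf : f ≠ 0)
    (hX : ¬ (MvPolynomial.X 0 ∣ f))
    (hY : ¬ (MvPolynomial.X 1 ∣ f))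
    (hε : ε = -1 ∨ ε = 1)
    (h : ∀ x y : ℝ, x * y * (x + y) ≠ 0 →
      ev f x y / (x ^ a * y ^ b * (x + y) ^ c) =
        ε * (ev f y x / (y ^ a * x ^ b * (x + y) ^ c))) :
    a = b := by
  classical
  set g : MvPolynomial (Fin 2) ℝ := rename (Equiv.swap (0 : Fin 2) 1) f with hg
  have hgev : ∀ x y : ℝ, MvPolynomial.eval ![x, y] g = ev f y x := by
    intro x y
    rw [hg, eval_rename]
    have hcomp : (![x, y] ∘ (Equiv.swap (0 : Fin 2) 1) : Fin 2 → ℝ) = ![y, x] := by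
      funext i
      fin_cases i <;> simp [Equiv.swap_apply_left, Equiv.swap_apply_right]
    rw [hcomp]
    rfl
  -- polynomial identity
  have key : f * (X 1) ^ a * (X 0) ^ b * (X 0 + X 1) ^ c * (X 0 * X 1 * (X 0 + X 1))
      = C ε * g * (X 0) ^ a * (X 1) ^ b * (X 0 + X 1) ^ c * (X 0 * X 1 * (X 0 + X 1)) := by
    apply MvPolynomial.funext
    intro v
    have hv : v = ![v 0, v 1] := by
      funext i; fin_cases i <;> simp
    set x := v 0
    set y := v 1
    rw [hv]
    simp only [map_mul, map_add, map_pow, eval_X, eval_C,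
      Matrix.cons_val_zero, Matrix.cons_val_one, Matrix.head_cons, hgev]
    by_cases hxy : x * y * (x + y) = 0
    · rw [hxy]; ring
    · have hx : x ≠ 0 := fun h0 => hxy (by rw [h0]; ring)
      have hy : y ≠ 0 := fun h0 => hxy (by rw [h0]; ring)
      have hs : x + y ≠ 0 := fun h0 => hxy (by rw [h0]; ring)
      have := h x y hxy
      have hcross : ev f x y * (y ^ a * x ^ b * (x + y) ^ c)
          = ε * ev f y x * (x ^ a * y ^ b * (x + y) ^ c) := by
        field_simp at this
        linear_combination (x + y) ^ c * this
      show ev f x y * y ^ a * x ^ b * (x + y) ^ c * (x * y * (x + y))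
          = ε * ev f y x * x ^ a * y ^ b * (x + y) ^ c * (x * y * (x + y))
      linear_combination (x * y * (x + y)) * hcross
  -- cancel the nonzero factors
  have hX0 : (X 0 : MvPolynomial (Fin 2) ℝ) ≠ 0 := X_ne_zero 0
  have hX1 : (X 1 : MvPolynomial (Fin 2) ℝ) ≠ 0 := X_ne_zero 1
  have hsum : (X 0 + X 1 : MvPolynomial (Fin 2) ℝ) ≠ 0 := by
    intro h0
    have := congrArg (MvPolynomial.eval ![(1:ℝ), 1]) h0
    simp at this
  have hfac : (X 0 * X 1 * (X 0 + X 1) : MvPolynomial (Fin 2) ℝ) ≠ 0 :=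
    mul_ne_zero (mul_ne_zero hX0 hX1) hsum
  have key2 : f * (X 1) ^ a * (X 0) ^ b * (X 0 + X 1) ^ c
      = C ε * g * (X 0) ^ a * (X 1) ^ b * (X 0 + X 1) ^ c :=
    mul_right_cancel₀ hfac key
  have key3 : f * (X 1) ^ a * (X 0) ^ b = C ε * g * (X 0) ^ a * (X 1) ^ b :=
    mul_right_cancel₀ (pow_ne_zero c hsum) key2
  -- now conclude a = b
  rcases lt_trichotomy a b with hab | hab | hab
  · exfalso
    obtain ⟨k, hk, hk0⟩ : ∃ k, b = a + k ∧ k ≠ 0 :=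
      ⟨b - a, by omega, by omega⟩
    subst hk
    have e : (f * (X 0) ^ k) * ((X 0) ^ a * (X 1) ^ a)
        = (C ε * g * (X 1) ^ k) * ((X 0) ^ a * (X 1) ^ a) := by
      rw [pow_add] at key3
      linear_combination key3
    have e2 : f * (X 0) ^ k = C ε * g * (X 1) ^ k :=
      mul_right_cancel₀ (mul_ne_zero (pow_ne_zero a hX0) (pow_ne_zero a hX1)) e
    have hd : (X 1 : MvPolynomial (Fin 2) ℝ) ∣ f * (X 0) ^ k := by
      rw [e2]
      exact Dvd.dvd.mul_left (dvd_pow_self (X 1) hk0) _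
    rcases primeX1.dvd_mul.mp hd with h1 | h1
    · exact hY h1
    · exact X1_not_dvd_X0_pow k h1
  · exact hab
  · exfalso
    obtain ⟨k, hk, hk0⟩ : ∃ k, a = b + k ∧ k ≠ 0 :=
      ⟨a - b, by omega, by omega⟩
    subst hk
    have e : (f * (X 1) ^ k) * ((X 0) ^ b * (X 1) ^ b)
        = (C ε * g * (X 0) ^ k) * ((X 0) ^ b * (X 1) ^ b) := by
      rw [pow_add] at key3
      linear_combination key3
    have e2 : f * (X 1) ^ k = C ε * g * (X 0) ^ k :=
      mul_right_cancel₀ (mul_ne_zero (pow_ne_zero b hX0) (pow_ne_zero b hX1)) e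
    have hd : (X 0 : MvPolynomial (Fin 2) ℝ) ∣ f * (X 1) ^ k := by
      rw [e2]
      exact Dvd.dvd.mul_left (dvd_pow_self (X 0) hk0) _
    rcases primeX0.dvd_mul.mp hd with h1 | h1
    · exact hX h1
    · exact X0_not_dvd_X1_pow k h1
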